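/- Suppose f : V → A is independent of J and g : V(m:f) → A is independent of K, with m ∈ K, n ∈ J, m ≠ n. Then there exist G : V → A independent of K and F : V(n:G) → A independent of J such that V(m:f)(n:g) = V(n:G)(m:F). -/

import Mathlib

/-- Two valuations agree outside `J`: they take the same values on all coordinates not in `J`. -/
def AgreeOutside {ι A : Type*} (J : Set ι) (a b : ι → A) : Prop :=
  ∀ i, i ∉ J → a i = b i

/-- `𝒰` is a `J`-saturated disjoint cover of `V`. -/
def IsSatDisjCover {ι A : Type*} (J : Set ι) (V : Set (ι → A))
    (𝒰 : Set (Set (ι → A))) : Prop :=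
  ⋃₀ 𝒰 = V ∧ 𝒰.Pairwise Disjoint ∧
    ∀ a ∈ V, ∀ b ∈ V, AgreeOutside J a b → ∀ U ∈ 𝒰, a ∈ U → b ∈ U

/-- `V = V₁ ∪_J V₂`: a `J`-saturated disjoint (binary) cover of `V`. -/
def UnionJ {ι A : Type*} (J : Set ι) (V V₁ V₂ : Set (ι → A)) : Prop :=
  V₁ ∪ V₂ = V ∧ Disjoint V₁ V₂ ∧
    ∀ a ∈ V, ∀ b ∈ V, AgreeOutside J a b →
      ((a ∈ V₁ → b ∈ V₁) ∧ (a ∈ V₂ → b ∈ V₂))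

/-- `f : V → A` is independent of `J`. -/
def IndepOf {ι A : Type*} (J : Set ι) (V : Set (ι → A)) (f : (ι → A) → A) : Prop :=
  ∀ a ∈ V, ∀ b ∈ V, AgreeOutside J a b → f a = f b

/-- `V(n:f) = { ⃗a(n : f ⃗a) : ⃗a ∈ V }`. -/
def teamUpd {ι A : Type*} [DecidableEq ι] (n : ι) (f : (ι → A) → A)
    (V : Set (ι → A)) : Set (ι → A) :=
  (fun a => Function.update a n (f a)) '' V

/-- `V(n:A) = { ⃗a(n : c) : ⃗a ∈ V, c ∈ A }`. -/
def teamExp {ι A : Type*} [DecidableEq ι] (n : ι) (V : Set (ι → A)) : Set (ι → A) :=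
  {x | ∃ a ∈ V, ∃ c : A, x = Function.update a n c}

/-- Commuting variations: if `f : V → A` is independent of `J`, `g : V(m:f) → A` is
independent of `K`, `m ∈ K`, `n ∈ J`, `m ≠ n`, then there are `G : V → A` independent
of `K` and `F : V(n:G) → A` independent of `J` with `V(m:f)(n:g) = V(n:G)(m:F)`. -/
theorem exists_commute_indep {ι A : Type*} [DecidableEq ι] (J K : Set ι) (m n : ι)
    (hm : m ∈ K) (hn : n ∈ J) (hmn : m ≠ n) (V : Set (ι → A)) (f g : (ι → A) → A)
    (hf : IndepOf J V f) (hg : IndepOf K (teamUpd m f V) g) :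
    ∃ G F : (ι → A) → A, IndepOf K V G ∧ IndepOf J (teamUpd n G V) F ∧
      teamUpd n g (teamUpd m f V) = teamUpd m F (teamUpd n G V) := by
  classical
  set G : (ι → A) → A := fun a => g (Function.update a m (f a)) with hG
  have hGindep : IndepOf K V G := by
    intro a ha b hb hab
    apply hg _ ⟨a, ha, rfl⟩ _ ⟨b, hb, rfl⟩
    intro i hi
    have him : i ≠ m := fun h => hi (h ▸ hm)
    simp [Function.update_of_ne him, hab i hi]
  set F : (ι → A) → A := fun x =>
    if h : ∃ a, a ∈ V ∧ Function.update a n (G a) = x then f h.choose else f x with hF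
  have hFkey : ∀ a ∈ V, F (Function.update a n (G a)) = f a := by
    intro a ha
    have h : ∃ b, b ∈ V ∧ Function.update b n (G b) = Function.update a n (G a) :=
      ⟨a, ha, rfl⟩
    simp only [hF, dif_pos h]
    obtain ⟨hb, heq⟩ := h.choose_spec
    apply hf _ hb _ ha
    intro i hi
    have hin : i ≠ n := fun h' => hi (h' ▸ hn)
    have := congrFun heq i
    simpa [Function.update_of_ne hin] using this
  refine ⟨G, F, hGindep, ?_, ?_⟩
  · rintro x ⟨a, ha, rfl⟩ y ⟨b, hb, rfl⟩ hxy
    have hab : AgreeOutside J a b := by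
      intro i hi
      have hin : i ≠ n := fun h' => hi (h' ▸ hn)
      have := hxy i hi
      simpa [Function.update_of_ne hin] using this
    rw [hFkey a ha, hFkey b hb]
    exact hf a ha b hb hab
  · ext x
    constructor
    · rintro ⟨_, ⟨a, ha, rfl⟩, rfl⟩
      refine ⟨Function.update a n (G a), ⟨a, ha, rfl⟩, ?_⟩
      dsimp only
      rw [hFkey a ha, Function.update_comm hmn.symm]
    · rintro ⟨_, ⟨a, ha, rfl⟩, rfl⟩
      refine ⟨Function.update a m (f a), ⟨a, ha, rfl⟩, ?_⟩
      dsimp only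
      rw [hFkey a ha, Function.update_comm hmn.symm]
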